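/- Let P, Q ⊆ 2^ω be perfect sets with Q ⊆ P and let A ⊆ Q. Then the μ_P-outer measure of A is at most the μ_Q-outer measure of A. In particular, every Q-null set A ⊆ Q is also P-null. -/

import Mathlib

open MeasureTheory Set Pointwise

/-- The Cantor space `2^ω`, a compact topological group under coordinatewise
addition mod 2. -/
abbrev CS := ℕ → ZMod 2

/-- The basic clopen set `[w]` determined by a finite binary sequence `w`:
all `x ∈ 2^ω` extending `w`. -/
def cyl (w : List (ZMod 2)) : Set CS := {x | ∀ i, i < w.length → x i = w.getD i 0}

/-- `w` is a branching node of `P`: both `[w⌢0] ∩ P` and `[w⌢1] ∩ P` are nonempty. -/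
def Branch (P : Set CS) (w : List (ZMod 2)) : Prop :=
  (cyl (w ++ [0]) ∩ P).Nonempty ∧ (cyl (w ++ [1]) ∩ P).Nonempty

/-- A perfect subset of Cantor space: nonempty, closed, with no isolated points. -/
def PerfSet (P : Set CS) : Prop := Perfect P ∧ P.Nonempty

/-- `ν` is a canonical measure of the perfect set `P`: a Borel probability measure with
`ν P = 1` and `ν [w⌢0] = ν [w⌢1]` for every branching node `w` of `P`. -/
def IsCanonical (P : Set CS) (ν : Measure CS) : Prop :=
  IsProbabilityMeasure ν ∧ ν P = 1 ∧
    ∀ w : List (ZMod 2), Branch P w → ν (cyl (w ++ [0])) = ν (cyl (w ++ [1]))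

/-- `A` is `P`-null: the `μ_P`-outer measure of `A ∩ P` is `0`
(quantified over all canonical measures of `P`). -/
def PNull (P A : Set CS) : Prop := ∀ ν : Measure CS, IsCanonical P ν → ν (A ∩ P) = 0

/-- `A` is `P`-measurable: `A ∩ P` differs from a Borel set by a `P`-null set,
i.e. it is null-measurable with respect to the canonical measure of `P`. -/
def PMeasurable (P A : Set CS) : Prop :=
  ∀ ν : Measure CS, IsCanonical P ν → NullMeasurableSet (A ∩ P) ν

/-- `X` is perfectly null: `P`-null for every perfect set `P`. -/
def PerfectlyNull (X : Set CS) : Prop := ∀ P, PerfSet P → PNull P X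

/-- `μ` is the fair-coin (Lebesgue product) measure on `2^ω`:
a Borel probability measure with `μ [w] = 2^{-|w|}` for every finite binary sequence. -/
def IsFairCoin (μ : Measure CS) : Prop :=
  IsProbabilityMeasure μ ∧ ∀ w : List (ZMod 2), μ (cyl w) = (2 : ENNReal)⁻¹ ^ w.length

/-- The number of branching nodes of `P` that are proper initial segments of `v`. -/
noncomputable def brCount (P : Set CS) (v : List (ZMod 2)) : ℕ :=
  Set.ncard {u : List (ZMod 2) | u <+: v ∧ u ≠ v ∧ Branch P u}

/-- A balanced perfect set: branching nodes of strictly smaller level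
are strictly shorter. -/
def BalancedPerf (P : Set CS) : Prop :=
  PerfSet P ∧ ∀ v w : List (ZMod 2), Branch P v → Branch P w →
    brCount P v < brCount P w → v.length < w.length

/-- A uniformly perfect set: on each length, either all nodes meeting `P` branch,
or none does. -/
def UniformlyPerf (P : Set CS) : Prop :=
  PerfSet P ∧ ∀ n : ℕ,
    (∀ w : List (ZMod 2), w.length = n → (cyl w ∩ P).Nonempty → Branch P w) ∨
    (∀ w : List (ZMod 2), w.length = n → ¬ Branch P w)

/-- A Silver perfect set: determined by a partial function `ℕ ⇀ 2`
whose domain has infinite complement. -/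
def SilverPerf (P : Set CS) : Prop :=
  ∃ f : ℕ → Option (ZMod 2), {n | f n = none}.Infinite ∧
    P = {x | ∀ n b, f n = some b → x n = b}

/-- A Marczewski null (`s₀`) set. -/
def S0Set (X : Set CS) : Prop :=
  ∀ P, PerfSet P → ∃ Q, PerfSet Q ∧ Q ⊆ P ∧ Q ∩ X = ∅

/-- `S` is a Sierpiński set with respect to the measure `μ`: uncountable, with
countable intersection with every `μ`-null set. -/
def Sierpinski (μ : Measure CS) (S : Set CS) : Prop :=
  ¬ S.Countable ∧ ∀ N : Set CS, μ N = 0 → (S ∩ N).Countable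

/-- The interleaving homeomorphism `h : 2^ω × 2^ω → 2^ω`,
`h(x,y) = ⟨x 0, y 0, x 1, y 1, …⟩`. -/
def interleave (p : CS × CS) : CS := fun n => if n % 2 = 0 then p.1 (n / 2) else p.2 (n / 2)

/-- `X` is universally null: outer measure zero with respect to every finite diffused
Borel measure on `2^ω`. -/
def UniversallyNull (X : Set CS) : Prop :=
  ∀ μ : Measure CS, IsFiniteMeasure μ → (∀ x : CS, μ {x} = 0) → μ X = 0

/-- `X` is strongly null: for every sequence of positive `ε n` there are sets `A n` of
diameter `< ε n` (with respect to the standard metric `d(x,y) = 2^{-min{n : x n ≠ y n}}`,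
expressed combinatorially) covering `X`. -/
def StronglyNull (X : Set CS) : Prop :=
  ∀ ε : ℕ → ℝ, (∀ n, 0 < ε n) → ∃ A : ℕ → Set CS,
    (∀ n, ∃ N : ℕ, (2 : ℝ)⁻¹ ^ N < ε n ∧ ∀ x ∈ A n, ∀ y ∈ A n, ∀ i < N, x i = y i) ∧
    X ⊆ ⋃ n, A n

/-- `X` is perfectly null in the transitive sense: for every perfect `P` there is a
`G_δ` set `G ⊇ X` with `(G + t) ∩ P` being `P`-null for every `t`. -/
def PNPrime (X : Set CS) : Prop :=
  ∀ P, PerfSet P → ∃ G : Set CS, IsGδ G ∧ X ⊆ G ∧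
    ∀ t : CS, PNull P ((fun g => g + t) '' G)

-- list lemmas
lemma getD_of_prefix {l l' : List (ZMod 2)} (h : l <+: l') {i : ℕ} (hi : i < l.length) :
    l.getD i 0 = l'.getD i 0 := by
  obtain ⟨t, rfl⟩ := h
  rw [List.getD_eq_getElem _ _ hi, List.getD_eq_getElem _ _ (by simp; omega)]
  simp [List.getElem_append_left hi]

lemma prefix_of_getD {l l' : List (ZMod 2)} (hl : l.length ≤ l'.length)
    (h : ∀ i < l.length, l.getD i 0 = l'.getD i 0) : l <+: l' := by
  rw [List.prefix_iff_eq_take]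
  apply List.ext_getElem (by simp [Nat.min_eq_left hl])
  intro i h1 h2
  have := h i h1
  rw [List.getD_eq_getElem _ _ h1, List.getD_eq_getElem _ _ (by omega)] at this
  simp [List.getElem_take, this]

lemma cyl_anti {u v : List (ZMod 2)} (h : u <+: v) : cyl v ⊆ cyl u := by
  intro x hx i hi
  rw [hx i (lt_of_lt_of_le hi h.length_le), getD_of_prefix h hi]

lemma mem_cyl_append {x : CS} {w : List (ZMod 2)} {b : ZMod 2} :
    x ∈ cyl (w ++ [b]) ↔ x ∈ cyl w ∧ x w.length = b := by
  constructor
  · intro hx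
    refine ⟨fun i hi => ?_, ?_⟩
    · rw [hx i (by simp; omega)]
      rw [List.getD_eq_getElem _ _ hi, List.getD_eq_getElem _ _ (by simp; omega)]
      simp [List.getElem_append_left hi]
    · have := hx w.length (by simp)
      rw [List.getD_eq_getElem _ _ (by simp)] at this
      simpa using this
  · rintro ⟨h1, h2⟩ i hi
    simp only [List.length_append, List.length_singleton] at hi
    rcases Nat.lt_or_ge i w.length with h | h
    · rw [h1 i h, List.getD_eq_getElem _ _ h, List.getD_eq_getElem _ _ (by simp; omega)]
      simp [List.getElem_append_left h]
    · have : i = w.length := by omega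
      subst this
      rw [h2, List.getD_eq_getElem _ _ (by simp)]
      simp [List.getElem_concat_length]

lemma zmod2_cases (c : ZMod 2) : c = 0 ∨ c = 1 := by revert c; decide

lemma cyl_eq_union (w : List (ZMod 2)) :
    cyl w = cyl (w ++ [0]) ∪ cyl (w ++ [1]) := by
  ext x
  simp only [Set.mem_union, mem_cyl_append]
  constructor
  · intro h
    rcases zmod2_cases (x w.length) with h' | h'
    · exact Or.inl ⟨h, h'⟩
    · exact Or.inr ⟨h, h'⟩
  · rintro (⟨h, _⟩ | ⟨h, _⟩) <;> exact h

lemma cyl_disjoint (w : List (ZMod 2)) : Disjoint (cyl (w ++ [0])) (cyl (w ++ [1])) := by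
  rw [Set.disjoint_left]
  rintro x h0 h1
  rw [mem_cyl_append] at h0 h1
  rw [h0.2] at h1
  exact absurd h1.2 (by decide)

lemma cyl_nil : cyl [] = Set.univ := by
  ext x; simp [cyl]

lemma isClopen_cyl (w : List (ZMod 2)) : IsClopen (cyl w) := by
  have : cyl w = ⋂ i ∈ Finset.range w.length, (fun x : CS => x i) ⁻¹' {w.getD i 0} := by
    ext x; simp [cyl]
  rw [this]
  exact isClopen_biInter_finset fun i _ =>
    ⟨(isClosed_discrete _).preimage (continuous_apply i),
     (isOpen_discrete _).preimage (continuous_apply i)⟩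

lemma measurableSet_cyl (w : List (ZMod 2)) : MeasurableSet (cyl w) :=
  (isClopen_cyl w).2.measurableSet

-- the word of x up to n
def word (x : CS) (n : ℕ) : List (ZMod 2) := List.ofFn (fun i : Fin n => x i)

@[simp] lemma word_length (x : CS) (n : ℕ) : (word x n).length = n := by simp [word]

lemma word_getD (x : CS) {n i : ℕ} (hi : i < n) : (word x n).getD i 0 = x i := by
  rw [List.getD_eq_getElem _ _ (by simp [hi])]
  simp [word]

lemma mem_cyl_word (x : CS) (n : ℕ) : x ∈ cyl (word x n) := by
  intro i hi
  rw [word_getD x (by simpa using hi)]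

lemma word_succ (x : CS) (n : ℕ) : word x (n + 1) = word x n ++ [x n] := by
  rw [word, List.ofFn_succ']
  simp [word, List.concat_eq_append, Fin.coe_castSucc]

lemma word_eq_of_mem_cyl {x : CS} {w : List (ZMod 2)} (h : x ∈ cyl w) :
    word x w.length = w := by
  apply List.ext_getElem (by simp)
  intro i h1 h2
  have := h i h2
  rw [List.getD_eq_getElem _ _ h2] at this
  simp [word, this]

lemma prefix_word_of_mem_cyl {x : CS} {w : List (ZMod 2)} (h : x ∈ cyl w) {n : ℕ}
    (hn : n ≤ w.length) : word x n <+: w := by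
  apply prefix_of_getD (by simpa)
  intro i hi
  simp only [word_length] at hi
  rw [word_getD x (by omega), h i (by omega)]

-- basis lemma
lemma exists_cyl_subset {U : Set CS} (hU : IsOpen U) {x : CS} (hx : x ∈ U) :
    ∃ n, cyl (word x n) ⊆ U := by
  rw [isOpen_pi_iff] at hU
  obtain ⟨I, u, hI, hsub⟩ := hU x hx
  rcases I.eq_empty_or_nonempty with rfl | hne
  · exact ⟨0, fun y _ => hsub (by simp)⟩
  refine ⟨I.max' hne + 1, fun y hy => hsub ?_⟩
  intro a ha
  have h1 : a < I.max' hne + 1 := Nat.lt_succ_of_le (I.le_max' a ha)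
  have := hy a (by simpa using h1)
  rw [word_getD x h1] at this
  rw [this]
  exact (hI a ha).2

-- measure lemmas
lemma canon_add {P : Set CS} {ν : Measure CS} (hν : IsCanonical P ν) (w : List (ZMod 2)) :
    ν (cyl w) = ν (cyl (w ++ [0])) + ν (cyl (w ++ [1])) := by
  rw [cyl_eq_union w]
  exact measure_union (cyl_disjoint w) (measurableSet_cyl _)

lemma canon_compl {P : Set CS} {ν : Measure CS} (hν : IsCanonical P ν) (hP : IsClosed P) :
    ν Pᶜ = 0 := by
  have h1 : IsProbabilityMeasure ν := hν.1
  rw [measure_compl hP.measurableSet (measure_ne_top ν P), hν.2.1, measure_univ, tsub_self]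

lemma canon_null {P : Set CS} {ν : Measure CS} (hν : IsCanonical P ν) (hP : IsClosed P)
    {w : List (ZMod 2)} (h : cyl w ∩ P = ∅) : ν (cyl w) = 0 := by
  have : cyl w ⊆ Pᶜ := by
    rw [Set.subset_compl_iff_disjoint_right, Set.disjoint_iff_inter_eq_empty]
    exact h
  exact le_antisymm (le_trans (measure_mono this) (canon_compl hν hP).le) (zero_le)

lemma two_mul_of_branch {P : Set CS} {ν : Measure CS} (hν : IsCanonical P ν)
    {w : List (ZMod 2)} (hw : Branch P w) (b : ZMod 2) :
    2 * ν (cyl (w ++ [b])) = ν (cyl w) := by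
  have heq := hν.2.2 w hw
  rcases zmod2_cases b with rfl | rfl
  · rw [canon_add hν w, ← heq, two_mul]
  · rw [canon_add hν w, heq, two_mul]

/-- The key cylinder comparison. -/
lemma cyl_compare {P Q : Set CS} (hPc : IsClosed P) (hQc : IsClosed Q) (hQP : Q ⊆ P)
    {νP νQ : Measure CS} (hνP : IsCanonical P νP) (hνQ : IsCanonical Q νQ) :
    ∀ n (w : List (ZMod 2)), w.length = n → (cyl w ∩ Q).Nonempty →
      νP (cyl w) ≤ νQ (cyl w) := by
  intro n
  induction n with
  | zero =>
    intro w hw _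
    rw [List.length_eq_zero_iff] at hw
    subst hw
    rw [cyl_nil]
    have h1 : IsProbabilityMeasure νP := hνP.1
    have h2 : IsProbabilityMeasure νQ := hνQ.1
    simp
  | succ n ih =>
    intro w hw hne
    obtain ⟨u, b, rfl⟩ : ∃ u b, w = u ++ [b] := by
      rcases List.eq_nil_or_concat w with rfl | ⟨u, b, hw'⟩
      · simp at hw
      · exact ⟨u, b, by simpa [List.concat_eq_append] using hw'⟩
    have hu : u.length = n := by simpa using hw
    have huQ : (cyl u ∩ Q).Nonempty :=
      hne.mono (Set.inter_subset_inter_left _ (cyl_anti ⟨[b], rfl⟩))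
    have ihu := ih u hu huQ
    by_cases hbr : Branch Q u
    · have hbrP : Branch P u :=
        ⟨hbr.1.mono (Set.inter_subset_inter_right _ hQP),
         hbr.2.mono (Set.inter_subset_inter_right _ hQP)⟩
      have h1 := two_mul_of_branch hνP hbrP b
      have h2 := two_mul_of_branch hνQ hbr b
      have : 2 * νP (cyl (u ++ [b])) ≤ 2 * νQ (cyl (u ++ [b])) := by
        rw [h1, h2]; exact ihu
      exact (ENNReal.mul_le_mul_iff_right (by norm_num) (by norm_num)).mp this
    · -- the other child misses Q
      have hsplit : cyl u ∩ Q = (cyl (u ++ [0]) ∩ Q) ∪ (cyl (u ++ [1]) ∩ Q) := by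
        rw [cyl_eq_union u, Set.union_inter_distrib_right]
      calc νP (cyl (u ++ [b])) ≤ νP (cyl u) := measure_mono (cyl_anti ⟨[b], rfl⟩)
        _ ≤ νQ (cyl u) := ihu
        _ = νQ (cyl (u ++ [b])) := by
            rw [canon_add hνQ u]
            rcases zmod2_cases b with rfl | rfl
            · have h0 : (cyl (u ++ [0]) ∩ Q).Nonempty := hne
              have h1 : cyl (u ++ [1]) ∩ Q = ∅ := by
                by_contra h
                exact hbr ⟨h0, Set.nonempty_iff_ne_empty.mpr h⟩
              rw [canon_null hνQ hQc h1, add_zero]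
            · have h1 : (cyl (u ++ [1]) ∩ Q).Nonempty := hne
              have h0 : cyl (u ++ [0]) ∩ Q = ∅ := by
                by_contra h
                exact hbr ⟨Set.nonempty_iff_ne_empty.mpr h, h1⟩
              rw [canon_null hνQ hQc h0, zero_add]

/-- Outer measure comparison for subsets of Q. -/
lemma outer_compare {P Q : Set CS} (hPc : IsClosed P) (hQc : IsClosed Q) (hQP : Q ⊆ P)
    {νP νQ : Measure CS} (hνP : IsCanonical P νP) (hνQ : IsCanonical Q νQ)
    {A : Set CS} (hA : A ⊆ Q) : νP A ≤ νQ A := by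
  have : IsProbabilityMeasure νQ := hνQ.1
  rw [Set.measure_eq_iInf_isOpen A νQ]
  refine le_iInf fun U => le_iInf fun hAU => le_iInf fun hU => ?_
  -- minimal good cylinders
  set good : List (ZMod 2) → Prop :=
    fun w => cyl w ⊆ U ∧ (cyl w ∩ Q).Nonempty with hgood
  set W : Set (List (ZMod 2)) :=
    {w | good w ∧ ∀ u, u <+: w → u ≠ w → ¬ good u} with hW
  have hWdisj : W.PairwiseDisjoint cyl := by
    intro w hw w' hw' hne
    rw [Function.onFun, Set.disjoint_left]
    intro x hx hx'
    rcases le_or_gt w.length w'.length with hle | hlt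
    · have hpre : w <+: w' := by
        refine prefix_of_getD hle fun i hi => ?_
        rw [← hx i hi, ← hx' i (by omega)]
      exact hw'.2 w hpre hne (hw.1)
    · have hpre : w' <+: w := by
        refine prefix_of_getD hlt.le fun i hi => ?_
        rw [← hx' i hi, ← hx i (by omega)]
      exact hw.2 w' hpre (Ne.symm hne) (hw'.1)
  have hAW : A ⊆ ⋃ w ∈ W, cyl w := by
    intro a ha
    obtain ⟨n, hn⟩ := exists_cyl_subset hU (hAU ha)
    have hgn : good (word a n) := ⟨hn, ⟨a, mem_cyl_word a n, hA ha⟩⟩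
    -- least k ≤ n with good (word a k)
    have hex : ∃ k, good (word a k) := ⟨n, hgn⟩
    classical
    let k := Nat.find hex
    have hk : good (word a k) := Nat.find_spec hex
    have hmin : ∀ j < k, ¬ good (word a j) := fun j hj => Nat.find_min hex hj
    refine Set.mem_biUnion ?_ (mem_cyl_word a k)
    refine ⟨hk, fun u hu hune => ?_⟩
    have huw : u = word a u.length := by
      have : word a u.length <+: word a k := by
        apply prefix_of_getD (by simpa using hu.length_le)
        intro i hi
        simp only [word_length] at hi
        rw [word_getD a (by omega), word_getD a (by
          have := hu.length_le; simp at this ⊢; omega)]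
      exact ((List.prefix_of_prefix_length_le hu this (by simp)).eq_of_length (by simp))
    intro hgu
    have hlt : u.length < k := by
      rcases Nat.lt_or_ge u.length k with h | h
      · exact h
      · exfalso
        have : u.length ≤ k := by simpa using hu.length_le
        have : u.length = k := le_antisymm this h
        exact hune (by rw [huw, this])
    exact hmin u.length hlt (by rw [← huw]; exact hgu)
  have hWc : W.Countable := Set.to_countable W
  calc νP A ≤ νP (⋃ w ∈ W, cyl w) := measure_mono hAW
    _ = ∑' w : W, νP (cyl w) :=
        measure_biUnion hWc hWdisj fun w _ => measurableSet_cyl w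
    _ ≤ ∑' w : W, νQ (cyl w) := by
        refine ENNReal.tsum_le_tsum fun w => ?_
        exact cyl_compare hPc hQc hQP hνP hνQ _ w rfl w.2.1.2
    _ = νQ (⋃ w ∈ W, cyl w) :=
        (measure_biUnion hWc hWdisj fun w _ => measurableSet_cyl w).symm
    _ ≤ νQ U := measure_mono (Set.iUnion₂_subset fun w hw => hw.1.1)

----------------------------------------------------------------
-- Construction of a canonical measure for an arbitrary perfect set
----------------------------------------------------------------

lemma getD_append_lt {u : List (ZMod 2)} {c : ZMod 2} {i : ℕ} (hi : i < u.length) :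
    (u ++ [c]).getD i 0 = u.getD i 0 := (getD_of_prefix ⟨[c], rfl⟩ hi).symm

lemma getD_append_len (u : List (ZMod 2)) (c : ZMod 2) :
    (u ++ [c]).getD u.length 0 = c := by
  rw [List.getD_eq_getElem _ _ (by simp)]
  simp [List.getElem_concat_length]

lemma take_append_getD_prefix {w : List (ZMod 2)} {j : ℕ} (hj : j < w.length) :
    w.take j ++ [w.getD j 0] <+: w := by
  have hlen : (w.take j).length = j := by simp; omega
  apply prefix_of_getD (by simp; omega)
  intro i hi
  simp only [List.length_append, hlen, List.length_singleton] at hi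
  rcases Nat.lt_or_ge i j with h | h
  · rw [getD_append_lt (by omega), getD_of_prefix (List.take_prefix j w) (by omega)]
  · have hij : i = j := by omega
    rw [hij]
    have := getD_append_len (w.take j) (w.getD j 0)
    rw [hlen] at this
    rw [this]

lemma branch_of_ne {Q : Set CS} {v : List (ZMod 2)} {c c' : ZMod 2} (h : c ≠ c')
    (h1 : (cyl (v ++ [c]) ∩ Q).Nonempty) (h2 : (cyl (v ++ [c']) ∩ Q).Nonempty) :
    Branch Q v := by
  rcases zmod2_cases c with rfl | rfl <;> rcases zmod2_cases c' with rfl | rfl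
  · exact absurd rfl h
  · exact ⟨h1, h2⟩
  · exact ⟨h2, h1⟩
  · exact absurd rfl h

lemma branch_nonempty {Q : Set CS} {w : List (ZMod 2)} (h : Branch Q w) :
    (cyl w ∩ Q).Nonempty :=
  h.1.mono (Set.inter_subset_inter_left _ (cyl_anti ⟨[0], rfl⟩))

lemma branch_child_nonempty {Q : Set CS} {w : List (ZMod 2)} (h : Branch Q w) (b : ZMod 2) :
    (cyl (w ++ [b]) ∩ Q).Nonempty := by
  rcases zmod2_cases b with rfl | rfl
  · exact h.1
  · exact h.2

/-- From perfectness: every cylinder meeting `Q` has a branching extension. -/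
lemma exists_branch_ext {Q : Set CS} (hQ : Perfect Q) {u : List (ZMod 2)}
    (hu : (cyl u ∩ Q).Nonempty) : ∃ v, u <+: v ∧ Branch Q v := by
  obtain ⟨x, hxc, hxQ⟩ := hu
  have hacc := hQ.acc x hxQ
  rw [accPt_iff_nhds] at hacc
  obtain ⟨y, ⟨hyc, hyQ⟩, hyx⟩ := hacc (cyl (word x u.length))
    ((isClopen_cyl _).2.mem_nhds (mem_cyl_word x _))
  have hex : ∃ d, x d ≠ y d := by
    by_contra h
    push_neg at h
    exact hyx (funext fun d => (h d).symm)
  classical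
  let d := Nat.find hex
  have hd : x d ≠ y d := Nat.find_spec hex
  have hdmin : ∀ i < d, x i = y i := fun i hi => by
    by_contra h
    exact absurd (Nat.find_min hex hi) (by simpa using h)
  have hdu : u.length ≤ d := by
    by_contra h
    push_neg at h
    have := hyc d (by simpa using h)
    rw [word_getD x h] at this
    exact hd this.symm
  refine ⟨word x d, ?_, ?_⟩
  · have := word_eq_of_mem_cyl hxc
    rw [← this]
    apply prefix_of_getD (by simpa using hdu)
    intro i hi
    simp only [word_length] at hi
    rw [word_getD x hi, word_getD x (by omega)]
  · apply branch_of_ne hd (c := x d) (c' := y d)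
    · exact ⟨x, mem_cyl_append.mpr ⟨mem_cyl_word x d, by rw [word_length]⟩, hxQ⟩
    · refine ⟨y, mem_cyl_append.mpr ⟨?_, by rw [word_length]⟩, hyQ⟩
      intro i hi
      simp only [word_length] at hi
      rw [word_getD x hi]
      exact (hdmin i hi).symm

def IsMinBranchExt (Q : Set CS) (u v : List (ZMod 2)) : Prop :=
  u <+: v ∧ Branch Q v ∧ ∀ v', u <+: v' → Branch Q v' → v.length ≤ v'.length

lemma exists_minBranchExt {Q : Set CS} (hQ : Perfect Q) {u : List (ZMod 2)}
    (hu : (cyl u ∩ Q).Nonempty) : ∃ v, IsMinBranchExt Q u v := by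
  classical
  have hex : ∃ k, ∃ v : List (ZMod 2), v.length = k ∧ u <+: v ∧ Branch Q v := by
    obtain ⟨v, hv1, hv2⟩ := exists_branch_ext hQ hu
    exact ⟨v.length, v, rfl, hv1, hv2⟩
  obtain ⟨v, hv0, hv1, hv2⟩ := Nat.find_spec hex
  refine ⟨v, hv1, hv2, fun v' hv'1 hv'2 => ?_⟩
  rw [hv0]
  exact Nat.find_min' hex ⟨v', rfl, hv'1, hv'2⟩

open Classical in
noncomputable def ext0 (Q : Set CS) (u : List (ZMod 2)) : List (ZMod 2) :=
  if h : ∃ v, IsMinBranchExt Q u v then h.choose else []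

lemma ext0_spec {Q : Set CS} (hQ : Perfect Q) {u : List (ZMod 2)}
    (hu : (cyl u ∩ Q).Nonempty) : IsMinBranchExt Q u (ext0 Q u) := by
  have h := exists_minBranchExt hQ hu
  rw [ext0]
  rw [dif_pos h]
  exact h.choose_spec

noncomputable def nodeAux (Q : Set CS) : List (ZMod 2) → List (ZMod 2)
  | [] => ext0 Q []
  | b :: r => ext0 Q (nodeAux Q r ++ [b])

noncomputable def node (Q : Set CS) (v : List (ZMod 2)) : List (ZMod 2) :=
  nodeAux Q v.reverse

lemma node_nil (Q : Set CS) : node Q [] = ext0 Q [] := rfl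

lemma node_append (Q : Set CS) (v : List (ZMod 2)) (b : ZMod 2) :
    node Q (v ++ [b]) = ext0 Q (node Q v ++ [b]) := by
  simp [node, nodeAux]

lemma node_branch {Q : Set CS} (hQ : Perfect Q) (hne : Q.Nonempty) :
    ∀ v, Branch Q (node Q v) := by
  intro v
  induction v using List.reverseRecOn with
  | nil =>
    rw [node_nil]
    exact (ext0_spec hQ (by rw [cyl_nil, Set.univ_inter]; exact hne)).2.1
  | append_singleton v b ih =>
    rw [node_append]
    exact (ext0_spec hQ (branch_child_nonempty ih b)).2.1

lemma node_min {Q : Set CS} (hQ : Perfect Q) (hne : Q.Nonempty) (v : List (ZMod 2))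
    (b : ZMod 2) : IsMinBranchExt Q (node Q v ++ [b]) (node Q (v ++ [b])) := by
  rw [node_append]
  exact ext0_spec hQ (branch_child_nonempty (node_branch hQ hne v) b)

lemma node_min_nil {Q : Set CS} (hQ : Perfect Q) (hne : Q.Nonempty) :
    IsMinBranchExt Q [] (node Q []) := by
  rw [node_nil]
  exact ext0_spec hQ (by rw [cyl_nil, Set.univ_inter]; exact hne)

lemma node_prefix_append {Q : Set CS} (hQ : Perfect Q) (hne : Q.Nonempty)
    (v : List (ZMod 2)) (b : ZMod 2) : node Q v ++ [b] <+: node Q (v ++ [b]) :=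
  (node_min hQ hne v b).1

lemma node_prefix {Q : Set CS} (hQ : Perfect Q) (hne : Q.Nonempty)
    {u v : List (ZMod 2)} (h : u <+: v) : node Q u <+: node Q v := by
  obtain ⟨t, rfl⟩ := h
  induction t using List.reverseRecOn with
  | nil => simp
  | append_singleton t b ih =>
    calc node Q u <+: node Q (u ++ t) := ih
      _ <+: node Q (u ++ t) ++ [b] := ⟨[b], rfl⟩
      _ <+: node Q ((u ++ t) ++ [b]) := node_prefix_append hQ hne _ b
      _ = node Q (u ++ (t ++ [b])) := by rw [List.append_assoc]

lemma node_length {Q : Set CS} (hQ : Perfect Q) (hne : Q.Nonempty) (v : List (ZMod 2)) :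
    v.length ≤ (node Q v).length := by
  induction v using List.reverseRecOn with
  | nil => exact Nat.zero_le _
  | append_singleton v b ih =>
    have h := (node_prefix_append hQ hne v b).length_le
    simp only [List.length_append, List.length_singleton] at h ⊢
    omega

noncomputable def hFun (Q : Set CS) (x : CS) : CS :=
  fun n => (node Q (word x (n + 1))).getD n 0

lemma word_mono (x : CS) {m n : ℕ} (h : m ≤ n) : word x m <+: word x n := by
  apply prefix_of_getD (by simpa using h)
  intro i hi
  simp only [word_length] at hi
  rw [word_getD x hi, word_getD x (by omega)]

lemma hFun_mem_cyl {Q : Set CS} (hQ : Perfect Q) (hne : Q.Nonempty) (x : CS) (k : ℕ) :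
    hFun Q x ∈ cyl (node Q (word x k)) := by
  intro n hn
  show (node Q (word x (n + 1))).getD n 0 = _
  have hl : n + 1 ≤ (node Q (word x (n + 1))).length := by
    simpa using node_length hQ hne (word x (n + 1))
  rcases le_or_gt (n + 1) k with h | h
  · exact getD_of_prefix (node_prefix hQ hne (word_mono x h))
      (lt_of_lt_of_le (Nat.lt_succ_self n) hl)
  · exact (getD_of_prefix (node_prefix hQ hne (word_mono x (by omega))) hn).symm

lemma hFun_mem {Q : Set CS} (hQ : Perfect Q) (hne : Q.Nonempty) (x : CS) :
    hFun Q x ∈ Q := by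
  suffices h : hFun Q x ∈ closure Q by rwa [hQ.closed.closure_eq] at h
  rw [mem_closure_iff]
  intro U hU hxU
  obtain ⟨m, hm⟩ := exists_cyl_subset hU hxU
  have h1 : hFun Q x ∈ cyl (node Q (word x m)) := hFun_mem_cyl hQ hne x m
  have h2 : word (hFun Q x) m <+: node Q (word x m) :=
    prefix_word_of_mem_cyl h1 (le_trans (by simp) (node_length hQ hne _))
  have h3 : (cyl (node Q (word x m)) ∩ Q).Nonempty :=
    branch_nonempty (node_branch hQ hne _)
  exact h3.mono (Set.inter_subset_inter_left _ ((cyl_anti h2).trans hm))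

lemma hFun_measurable (Q : Set CS) : Measurable (hFun Q) := by
  rw [measurable_pi_iff]
  intro n
  have : (fun x => hFun Q x n) =
      (fun f : Fin (n + 1) → ZMod 2 => (node Q (List.ofFn f)).getD n 0) ∘
        (fun (x : CS) (i : Fin (n + 1)) => x i) := rfl
  rw [this]
  exact (measurable_of_countable _).comp (measurable_pi_lambda _ fun i => measurable_pi_apply (i : ℕ))

lemma exists_first_diff' {v v' : List (ZMod 2)} (h1 : ¬ v <+: v') (h2 : ¬ v' <+: v) :
    ∃ j, j < v.length ∧ j < v'.length ∧ v.take j = v'.take j ∧ v.getD j 0 ≠ v'.getD j 0 := by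
  classical
  have hex : ∃ j, j < v.length ∧ j < v'.length ∧ v.getD j 0 ≠ v'.getD j 0 := by
    by_contra h
    push_neg at h
    rcases le_total v.length v'.length with hle | hle
    · exact h1 (prefix_of_getD hle fun i hi => h i hi (by omega))
    · exact h2 (prefix_of_getD hle fun i hi => (h i (by omega) hi).symm)
  set j := Nat.find hex with hjdef
  obtain ⟨hj1, hj2, hj3⟩ : j < v.length ∧ j < v'.length ∧ v.getD j 0 ≠ v'.getD j 0 :=
    Nat.find_spec hex
  refine ⟨j, hj1, hj2, ?_, hj3⟩
  apply List.ext_getElem (by simp [List.length_take]; omega)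
  intro i hh1 hh2
  simp only [List.length_take] at hh1
  have hi : i < j := by omega
  have := Nat.find_min hex hi
  push_neg at this
  have heq := this (by omega) (by omega)
  rw [List.getD_eq_getElem _ _ (by omega), List.getD_eq_getElem _ _ (by omega)] at heq
  simpa [List.getElem_take] using heq

lemma node_ne_getD {Q : Set CS} (hQ : Perfect Q) (hne : Q.Nonempty)
    {v v' : List (ZMod 2)} (hl : v.length = v'.length) (hvv : v ≠ v') :
    ∃ j, j < (node Q v).length ∧ j < (node Q v').length ∧
      (node Q v).getD j 0 ≠ (node Q v').getD j 0 := by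
  have h1 : ¬ v <+: v' := fun h => hvv (h.eq_of_length hl)
  have h2 : ¬ v' <+: v := fun h => hvv (h.eq_of_length hl.symm).symm
  obtain ⟨j, hj1, hj2, hjtake, hjne⟩ := exists_first_diff' h1 h2
  set u := v.take j with hu
  have hu' : v'.take j = u := hjtake.symm
  have hp1 : u ++ [v.getD j 0] <+: v := take_append_getD_prefix hj1
  have hp2 : u ++ [v'.getD j 0] <+: v' := by
    rw [hjtake]; exact take_append_getD_prefix hj2
  have hn1 : node Q u ++ [v.getD j 0] <+: node Q v :=
    (node_prefix_append hQ hne u _).trans (node_prefix hQ hne hp1)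
  have hn2 : node Q u ++ [v'.getD j 0] <+: node Q v' :=
    (node_prefix_append hQ hne u _).trans (node_prefix hQ hne hp2)
  refine ⟨(node Q u).length, by
      have := hn1.length_le; simp at this; omega,
    by have := hn2.length_le; simp at this; omega, ?_⟩
  rw [← getD_of_prefix hn1 (by simp), ← getD_of_prefix hn2 (by simp),
    getD_append_len, getD_append_len]
  exact hjne

lemma hFun_preimage {Q : Set CS} (hQ : Perfect Q) (hne : Q.Nonempty)
    (v : List (ZMod 2)) (b : ZMod 2) :
    hFun Q ⁻¹' cyl (node Q v ++ [b]) = cyl (v ++ [b]) := by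
  ext x
  simp only [Set.mem_preimage]
  constructor
  · intro hx
    have h1 : hFun Q x ∈ cyl (node Q (word x v.length)) := hFun_mem_cyl hQ hne x v.length
    have hv : word x v.length = v := by
      by_contra hvv
      obtain ⟨j, hj1, hj2, hj3⟩ := node_ne_getD hQ hne (by simp) hvv
      have e1 : hFun Q x j = (node Q (word x v.length)).getD j 0 := h1 j hj1
      have e2 : hFun Q x j = (node Q v).getD j 0 := by
        have := hx j (by simp; omega)
        rwa [getD_append_lt hj2] at this
      exact hj3 (e1 ▸ e2 ▸ rfl)
    have h2 : hFun Q x ∈ cyl (node Q (word x (v.length + 1))) :=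
      hFun_mem_cyl hQ hne x (v.length + 1)
    rw [word_succ, hv] at h2
    have hxl : x v.length = b := by
      have hp : node Q v ++ [x v.length] <+: node Q (v ++ [x v.length]) :=
        node_prefix_append hQ hne v _
      have e3 : hFun Q x (node Q v).length = x v.length := by
        have := h2 (node Q v).length (by
          have := hp.length_le; simp at this ⊢; omega)
        rw [this, ← getD_of_prefix hp (by simp), getD_append_len]
      have e4 : hFun Q x (node Q v).length = b := by
        have := hx (node Q v).length (by simp)
        rwa [getD_append_len] at this
      rw [← e3, e4]
    rw [mem_cyl_append]
    refine ⟨?_, hxl⟩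
    rw [← hv]
    exact mem_cyl_word x v.length
  · intro hx
    have hw : word x (v.length + 1) = v ++ [b] := by
      have := word_eq_of_mem_cyl hx
      simpa using this
    have := hFun_mem_cyl hQ hne x (v.length + 1)
    rw [hw] at this
    exact cyl_anti (node_prefix_append hQ hne v b) this

lemma branch_cases {Q : Set CS} {w w' u : List (ZMod 2)} (hw : Branch Q w)
    (hw' : Branch Q w') (hu : u <+: w) (hu' : u <+: w') :
    w <+: w' ∨ w' <+: w ∨
      ∃ p, Branch Q p ∧ u <+: p ∧ p <+: w ∧ p <+: w' ∧ p ≠ w ∧ p ≠ w' := by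
  by_cases h1 : w <+: w'
  · exact Or.inl h1
  by_cases h2 : w' <+: w
  · exact Or.inr (Or.inl h2)
  obtain ⟨j, hj1, hj2, hjtake, hjne⟩ := exists_first_diff' h1 h2
  refine Or.inr (Or.inr ⟨w.take j, ?_, ?_, List.take_prefix j w, ?_, ?_, ?_⟩)
  · apply branch_of_ne hjne
    · exact (branch_nonempty hw).mono
        (Set.inter_subset_inter_left _ (cyl_anti (take_append_getD_prefix hj1)))
    · rw [hjtake]
      exact (branch_nonempty hw').mono
        (Set.inter_subset_inter_left _ (cyl_anti (take_append_getD_prefix hj2)))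
  · -- u <+: w.take j
    have hju : u.length ≤ j := by
      by_contra h
      push_neg at h
      apply hjne
      rw [← getD_of_prefix hu h, ← getD_of_prefix hu' h]
    apply prefix_of_getD (by simp; omega)
    intro i hi
    rw [getD_of_prefix hu hi, ← getD_of_prefix (List.take_prefix j w) (by simp; omega)]
  · rw [hjtake]; exact List.take_prefix j w'
  · intro h
    have := congrArg List.length h
    simp at this
    omega
  · intro h
    rw [hjtake] at h
    have := congrArg List.length h
    simp at this
    omega

/-- Every branching node of `Q` is in the range of `node Q`. -/
lemma node_surj {Q : Set CS} (hQ : Perfect Q) (hne : Q.Nonempty) :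
    ∀ n (w : List (ZMod 2)), w.length = n → Branch Q w → ∃ v, node Q v = w := by
  intro n
  induction n using Nat.strong_induction_on with
  | _ n ih =>
    intro w hwn hw
    set J : Set ℕ := {j | j < w.length ∧ Branch Q (w.take j)} with hJ
    by_cases hJe : J.Nonempty
    · -- take the largest proper branching prefix
      have hbdd : BddAbove J := ⟨w.length, fun j hj => hj.1.le⟩
      set j₀ := sSup J with hj₀
      have hj₀J : j₀ ∈ J := Nat.sSup_mem hJe hbdd
      have hj₀max : ∀ j ∈ J, j ≤ j₀ := fun j hj => le_csSup hbdd hj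
      have hj₀lt : j₀ < w.length := hj₀J.1
      set u := w.take j₀ with hu
      have hulen : u.length = j₀ := by simp [hu, List.length_take]; omega
      set c := w.getD j₀ 0 with hc
      have huc : u ++ [c] <+: w := take_append_getD_prefix hj₀J.1
      obtain ⟨v, hv⟩ := ih j₀ (by omega) u hulen hj₀J.2
      refine ⟨v ++ [c], ?_⟩
      have hm := node_min hQ hne v c
      rw [hv] at hm
      rcases branch_cases hw hm.2.1 huc hm.1 with h | h | ⟨p, hpb, hpu, hpw, hpm, hpnw, hpnm⟩
      · exact ((h.eq_of_length (le_antisymm h.length_le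
          (hm.2.2 w huc hw))).symm)
      · rcases eq_or_ne (node Q (v ++ [c])) w with he | hne'
        · exact he
        · exfalso
          have hlt : (node Q (v ++ [c])).length < w.length := by
            rcases lt_or_eq_of_le h.length_le with h' | h'
            · exact h'
            · exact absurd (h.eq_of_length h') hne'
          have : (node Q (v ++ [c])).length ∈ J := by
            constructor
            · exact hlt
            · rw [← List.prefix_iff_eq_take.mp h]
              exact hm.2.1
          have h1 := hj₀max _ this
          have h2 : j₀ + 1 ≤ (node Q (v ++ [c])).length := by
            have := hm.1.length_le
            simp only [List.length_append, List.length_singleton, hulen] at this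
            omega
          omega
      · exfalso
        have hplt : p.length < w.length := by
          rcases lt_or_eq_of_le hpw.length_le with h' | h'
          · exact h'
          · exact absurd (hpw.eq_of_length h') hpnw
        have : p.length ∈ J := by
          constructor
          · exact hplt
          · rw [← List.prefix_iff_eq_take.mp hpw]
            exact hpb
        have h1 := hj₀max _ this
        have h2 : j₀ + 1 ≤ p.length := by
          have := hpu.length_le
          simp only [List.length_append, List.length_singleton, hulen] at this
          omega
        omega
    · -- no proper branching prefix: w is the root node
      refine ⟨[], ?_⟩
      have hm := node_min_nil hQ hne
      rcases branch_cases hw hm.2.1 w.nil_prefix (node Q []).nil_prefix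
        with h | h | ⟨p, hpb, _, hpw, hpm, hpnw, _⟩
      · exact ((h.eq_of_length (le_antisymm h.length_le
          (hm.2.2 w w.nil_prefix hw))).symm)
      · rcases eq_or_ne (node Q []) w with he | hne'
        · exact he
        · exfalso
          apply hJe
          refine ⟨(node Q []).length, ?_, ?_⟩
          · rcases lt_or_eq_of_le h.length_le with h' | h'
            · exact h'
            · exact absurd (h.eq_of_length h') hne'
          · rw [← List.prefix_iff_eq_take.mp h]
            exact hm.2.1
      · exfalso
        apply hJe
        refine ⟨p.length, ?_, ?_⟩
        · rcases lt_or_eq_of_le hpw.length_le with h' | h'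
          · exact h'
          · exact absurd (hpw.eq_of_length h') hpnw
        · rw [← List.prefix_iff_eq_take.mp hpw]
          exact hpb

----------------------------------------------------------------
-- The fair-coin (Haar) measure and the canonical measure
----------------------------------------------------------------

noncomputable def K0 : TopologicalSpace.PositiveCompacts CS :=
  ⟨⟨Set.univ, isCompact_univ⟩, by simp⟩

noncomputable def coin : Measure CS := Measure.addHaarMeasure K0

lemma coin_univ : coin Set.univ = 1 := by
  have := Measure.addHaarMeasure_self (K₀ := K0)
  simpa [K0, coin] using this

instance : IsProbabilityMeasure coin := ⟨coin_univ⟩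

instance : coin.IsAddLeftInvariant := by unfold coin; infer_instance

lemma zmod2_add_iff (a b c : ZMod 2) : a + b = c ↔ b = a + c := by revert a b c; decide

lemma coin_cyl_eq {w w' : List (ZMod 2)} (h : w.length = w'.length) :
    coin (cyl w) = coin (cyl w') := by
  set t : CS := fun i => w.getD i 0 + w'.getD i 0 with ht
  have key : (fun x => t + x) ⁻¹' cyl w' = cyl w := by
    ext x
    simp only [Set.mem_preimage]
    constructor
    · intro hx i hi
      have := hx i (by omega)
      rw [Pi.add_apply, zmod2_add_iff] at this
      rw [this, ht]
      simp only
      rcases zmod2_cases (w.getD i 0) with h1 | h1 <;>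
        rcases zmod2_cases (w'.getD i 0) with h2 | h2 <;> rw [h1, h2] <;> decide
    · intro hx i hi
      rw [Pi.add_apply, zmod2_add_iff, ht]
      simp only
      have := hx i (by omega)
      rw [this]
      rcases zmod2_cases (w.getD i 0) with h1 | h1 <;>
        rcases zmod2_cases (w'.getD i 0) with h2 | h2 <;> rw [h1, h2] <;> decide
  rw [← key, measure_preimage_add]

/-- Every perfect set admits a canonical measure. -/
lemma exists_canonical {Q : Set CS} (hQ : PerfSet Q) : ∃ ν, IsCanonical Q ν := by
  obtain ⟨hQp, hQne⟩ := hQ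
  refine ⟨coin.map (hFun Q), ?_, ?_, ?_⟩
  · exact Measure.isProbabilityMeasure_map (hFun_measurable Q).aemeasurable
  · rw [Measure.map_apply (hFun_measurable Q) hQp.closed.measurableSet]
    have : hFun Q ⁻¹' Q = Set.univ :=
      Set.eq_univ_of_forall fun x => hFun_mem hQp hQne x
    rw [this, coin_univ]
  · intro w hw
    obtain ⟨v, hv⟩ := node_surj hQp hQne w.length w rfl hw
    rw [Measure.map_apply (hFun_measurable Q) (measurableSet_cyl _),
      Measure.map_apply (hFun_measurable Q) (measurableSet_cyl _),
      ← hv, hFun_preimage hQp hQne, hFun_preimage hQp hQne]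
    exact coin_cyl_eq (by simp)


/-- If `Q ⊆ P` are perfect and `A ⊆ Q`, then the `μ_P`-outer measure of `A`
is at most the `μ_Q`-outer measure of `A`; in particular every `Q`-null `A ⊆ Q` is `P`-null. -/
theorem stmt_0 (P Q : Set CS) (hP : PerfSet P) (hQ : PerfSet Q) (hQP : Q ⊆ P)
    (A : Set CS) (hA : A ⊆ Q) :
    (∀ νP νQ : Measure CS, IsCanonical P νP → IsCanonical Q νQ → νP A ≤ νQ A) ∧
    (PNull Q A → PNull P A) := by

  constructor
  · intro νP νQ hνP hνQ
    exact outer_compare hP.1.closed hQ.1.closed hQP hνP hνQ hA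
  · intro hQN νP hνP
    obtain ⟨νQ, hνQ⟩ := exists_canonical hQ
    have h0 := hQN νQ hνQ
    rw [Set.inter_eq_self_of_subset_left hA] at h0
    rw [Set.inter_eq_self_of_subset_left (hA.trans hQP)]
    exact le_antisymm
      ((outer_compare hP.1.closed hQ.1.closed hQP hνP hνQ hA).trans h0.le)
      (zero_le)
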